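/- Let k ≥ 1 be an integer and ε ∈ {1, −1}. Let p be a prime not dividing 2k+1, let n be an odd positive integer such that 2 is not a square in ℤ/pℤ, and suppose that for some primitive (2k+1)-th root of unity ζ in an algebraic closure of 𝔽_{p^n}, the element ζ^{i} + ζ^{−i} does not lie in (the image of) 𝔽_{p^n} for every 1 ≤ i ≤ k. Then for all x, y ∈ SL₂(𝔽_{p^n}), the trace of x² · (x²·y·x^{2ε}·y⁻¹)^{k} is nonzero; in particular, no element of SL₂(𝔽_{p^n}) of trace zero lies in the image of the map (x, y) ↦ x² · (x²·y·x^{2ε}·y⁻¹)^{k}. -/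

import Mathlib

open Matrix


def chebW {R : Type*} [CommRing R] (T : R) : ℕ → R
  | 0 => 1
  | 1 => T - 1
  | (j+2) => T * chebW T (j+1) - chebW T j

@[simp] lemma chebW_zero {R : Type*} [CommRing R] (T : R) : chebW T 0 = 1 := rfl
@[simp] lemma chebW_one {R : Type*} [CommRing R] (T : R) : chebW T 1 = T - 1 := rfl
lemma chebW_add_two {R : Type*} [CommRing R] (T : R) (j : ℕ) :
    chebW T (j+2) = T * chebW T (j+1) - chebW T j := rfl

lemma chebW_map {R S : Type*} [CommRing R] [CommRing S] (φ : R →+* S) (T : R) :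
    ∀ j, φ (chebW T j) = chebW (φ T) j := by
  have H : ∀ j, φ (chebW T j) = chebW (φ T) j ∧ φ (chebW T (j+1)) = chebW (φ T) (j+1) := by
    intro j
    induction j with
    | zero => simp
    | succ m ih =>
      refine ⟨ih.2, ?_⟩
      rw [show m + 1 + 1 = m + 2 from rfl, chebW_add_two, chebW_add_two]
      simp [ih.1, ih.2]
  exact fun j => (H j).1

lemma chebW_identity {K : Type*} [Field K] (T lam : K) (h : lam * T = lam ^ 2 + 1) :
    ∀ j, lam ^ j * (lam ^ 2 - 1) * chebW T j = (lam - 1) * (lam ^ (2*j+1) + 1) := by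
  have H : ∀ j, (lam ^ j * (lam ^ 2 - 1) * chebW T j = (lam - 1) * (lam ^ (2*j+1) + 1)) ∧
      (lam ^ (j+1) * (lam ^ 2 - 1) * chebW T (j+1) = (lam - 1) * (lam ^ (2*(j+1)+1) + 1)) := by
    intro j
    induction j with
    | zero =>
      constructor
      · simp only [pow_zero, chebW_zero, mul_one, one_mul]; ring
      · simp only [chebW_one, zero_add]
        linear_combination (lam^2 - 1) * h
    | succ m ih =>
      refine ⟨ih.2, ?_⟩
      rw [show m + 1 + 1 = m + 2 from rfl, chebW_add_two]
      have h1 := ih.1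
      have h2 := ih.2
      linear_combination (lam * T) * h2 - lam^2 * h1 + (lam - 1) * (lam ^ (2*m+3) + 1) * h
  exact fun j => (H j).1

lemma chebW_two' {R : Type*} [CommRing R] : ∀ j, chebW (2 : R) j = 1 := by
  have H : ∀ j, chebW (2:R) j = 1 ∧ chebW (2:R) (j+1) = 1 := by
    intro j
    induction j with
    | zero => constructor <;> norm_num
    | succ m ih =>
      refine ⟨ih.2, ?_⟩
      rw [show m + 1 + 1 = m + 2 from rfl, chebW_add_two, ih.1, ih.2]; ring
  exact fun j => (H j).1

lemma chebW_neg_two {R : Type*} [CommRing R] :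
    ∀ j, chebW (-2 : R) j = (-1)^j * (2*j+1 : ℕ) := by
  have H : ∀ j, (chebW (-2:R) j = (-1)^j * (2*j+1 : ℕ)) ∧
      (chebW (-2:R) (j+1) = (-1)^(j+1) * (2*(j+1)+1 : ℕ)) := by
    intro j
    induction j with
    | zero =>
      constructor
      · simp only [chebW_zero, pow_zero]; norm_num
      · simp only [chebW_one, zero_add]; push_cast; ring
    | succ m ih =>
      refine ⟨ih.2, ?_⟩
      rw [show m + 1 + 1 = m + 2 from rfl, chebW_add_two, ih.1, ih.2]
      push_cast; ring
  exact fun j => (H j).1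


lemma adj_fin_two_eq {R : Type*} [CommRing R] (M : Matrix (Fin 2) (Fin 2) R) :
    Matrix.adjugate M = Matrix.trace M • (1 : Matrix (Fin 2) (Fin 2) R) - M := by
  ext i j
  fin_cases i <;> fin_cases j <;>
    simp [Matrix.adjugate_fin_two, Matrix.trace_fin_two, Matrix.one_apply]

lemma trace_adj_fin_two {R : Type*} [CommRing R] (M : Matrix (Fin 2) (Fin 2) R) :
    Matrix.trace (Matrix.adjugate M) = Matrix.trace M := by
  rw [adj_fin_two_eq, Matrix.trace_sub, Matrix.trace_smul, Matrix.trace_one, smul_eq_mul]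
  simp only [Fintype.card_fin, Nat.cast_ofNat]
  ring

lemma sq_fin_two {R : Type*} [CommRing R] (M : Matrix (Fin 2) (Fin 2) R) :
    M * M = Matrix.trace M • M - M.det • (1 : Matrix (Fin 2) (Fin 2) R) := by
  have h := Matrix.mul_adjugate M
  rw [adj_fin_two_eq] at h
  rw [Matrix.mul_sub, Matrix.mul_smul, mul_one] at h
  linear_combination (norm := abel) -h

lemma trace_sq_fin_two {R : Type*} [CommRing R] (M : Matrix (Fin 2) (Fin 2) R) :
    Matrix.trace (M * M) = Matrix.trace M * Matrix.trace M - 2 * M.det := by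
  rw [sq_fin_two, Matrix.trace_sub, Matrix.trace_smul, Matrix.trace_smul, Matrix.trace_one]
  simp only [smul_eq_mul, Fintype.card_fin, Nat.cast_ofNat]
  ring

lemma trace_mul_pow_rec {R : Type*} [CommRing R] (A B : Matrix (Fin 2) (Fin 2) R)
    (hB : B.det = 1) (j : ℕ) :
    Matrix.trace (A * B ^ (j+2)) =
      Matrix.trace B * Matrix.trace (A * B ^ (j+1)) - Matrix.trace (A * B ^ j) := by
  have hsq : B ^ (j+2) = Matrix.trace B • B ^ (j+1) - B ^ j := by
    have h : B ^ (j+2) = B ^ j * (B * B) := by rw [pow_add, pow_two]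
    rw [h, sq_fin_two, hB, one_smul, Matrix.mul_sub, Matrix.mul_smul, mul_one, ← pow_succ]
  rw [hsq, Matrix.mul_sub, Matrix.mul_smul, Matrix.trace_sub, Matrix.trace_smul, smul_eq_mul]

lemma trace_word {R : Type*} [CommRing R] (u v : Matrix (Fin 2) (Fin 2) R)
    (hu : u.det = 1) (hv : v.det = 1)
    (ht : Matrix.trace v = Matrix.trace u) :
    ∀ j, Matrix.trace (u * (u * v) ^ j) =
      Matrix.trace u * chebW (Matrix.trace (u * v)) j := by
  have key1 : Matrix.trace (u * (u * v)) =
      Matrix.trace u * Matrix.trace (u * v) - Matrix.trace v := by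
    have h1 : u * (u * v) = Matrix.trace u • (u * v) - v := by
      rw [← mul_assoc, sq_fin_two u, hu, one_smul, Matrix.sub_mul, Matrix.smul_mul,
        Matrix.one_mul]
    rw [h1, Matrix.trace_sub, Matrix.trace_smul, smul_eq_mul]
  have H : ∀ j, (Matrix.trace (u * (u * v) ^ j) =
        Matrix.trace u * chebW (Matrix.trace (u * v)) j) ∧
      (Matrix.trace (u * (u * v) ^ (j+1)) =
        Matrix.trace u * chebW (Matrix.trace (u * v)) (j+1)) := by
    intro j
    induction j with
    | zero =>
      constructor
      · simp
      · rw [zero_add, pow_one, key1, chebW_one, ht]; ring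
    | succ m ih =>
      refine ⟨ih.2, ?_⟩
      rw [show m + 1 + 1 = m + 2 from rfl, chebW_add_two,
        trace_mul_pow_rec u (u*v) (by simp [Matrix.det_mul, hu, hv]) m, ih.1, ih.2]
      ring
  exact fun j => (H j).1


lemma two_not_sq (p : ℕ) [Fact p.Prime] (n : ℕ) (hn : 0 < n) (hodd : Odd n)
    (h2 : ¬ IsSquare (2 : ZMod p)) (s : GaloisField p n) : s * s ≠ 2 := by
  have hp : p.Prime := Fact.out
  have hp2 : p ≠ 2 := by
    intro h
    subst h
    have : IsSquare (2 : ZMod 2) := ⟨0, rfl⟩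
    exact h2 this
  have hpodd : Odd p := hp.odd_of_ne_two hp2
  haveI : Fintype (GaloisField p n) := Fintype.ofFinite _
  have hcard : Fintype.card (GaloisField p n) = p ^ n := by
    rw [← Nat.card_eq_fintype_card]; exact GaloisField.card p n hn.ne'
  have h2F : (2 : GaloisField p n) ≠ 0 := by
    intro h
    have h' : ((2 : ℕ) : GaloisField p n) = 0 := by exact_mod_cast h
    have := (CharP.cast_eq_zero_iff (GaloisField p n) p 2).mp h'
    exact hp2 ((Nat.prime_dvd_prime_iff_eq hp Nat.prime_two).mp this)
  have h2Zp : (2 : ZMod p) ≠ 0 := by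
    intro h
    have h' : ((2 : ℕ) : ZMod p) = 0 := by exact_mod_cast h
    have := (ZMod.natCast_eq_zero_iff 2 p).mp h'
    exact hp2 ((Nat.prime_dvd_prime_iff_eq hp Nat.prime_two).mp this)
  have hringchar : ringChar (ZMod p) ≠ 2 := by
    rw [ZMod.ringChar_zmod_n]; exact hp2
  have hZp : (2 : ZMod p) ^ (p / 2) = -1 := by
    rcases FiniteField.pow_dichotomy hringchar h2Zp with h | h
    · rw [ZMod.card] at h
      exact absurd ((ZMod.euler_criterion p h2Zp).mpr h) h2
    · rw [ZMod.card] at h; exact h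
  set φ := algebraMap (ZMod p) (GaloisField p n) with hφ
  have halg : φ (2 : ZMod p) = 2 := by rw [map_ofNat]
  have hF2 : (2 : GaloisField p n) ^ (p / 2) = -1 := by
    rw [← halg, ← map_pow, hZp, map_neg, _root_.map_one]
  set m := ∑ i ∈ Finset.range n, p ^ i with hm
  have hmodd : Odd m := by
    rw [Nat.odd_iff, hm, Finset.sum_nat_mod]
    have : ∀ i ∈ Finset.range n, p ^ i % 2 = 1 := fun i _ => Nat.odd_iff.mp (hpodd.pow)
    rw [Finset.sum_congr rfl this]
    simpa using Nat.odd_iff.mp hodd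
  have hexp : p / 2 * m = p ^ n / 2 := by
    have h1 : 2 * (p / 2) = p - 1 := Nat.two_mul_odd_div_two (Nat.odd_iff.mp hpodd)
    have h2' : 2 * (p ^ n / 2) = p ^ n - 1 := Nat.two_mul_odd_div_two (Nat.odd_iff.mp hpodd.pow)
    have h1le : 1 ≤ p := hp.one_lt.le
    have h2le : 1 ≤ p ^ n := Nat.one_le_pow _ _ hp.pos
    have h3 : (p - 1) * m = p ^ n - 1 := by
      have hz : ((∑ i ∈ Finset.range n, (p:ℤ) ^ i)) * ((p:ℤ) - 1) = (p:ℤ)^n - 1 :=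
        geom_sum_mul _ _
      zify [h1le, h2le, hm]
      rw [mul_comm]
      exact_mod_cast hz
    have h4 : 2 * (p / 2 * m) = 2 * (p ^ n / 2) := by
      rw [← mul_assoc, h1, h3]; exact h2'.symm
    omega
  have hcontr : (2 : GaloisField p n) ^ (p ^ n / 2) = -1 := by
    rw [← hexp, pow_mul, hF2, hmodd.neg_one_pow]
  intro hs
  have hs0 : s ≠ 0 := by
    rintro rfl
    rw [mul_zero] at hs
    exact h2F hs.symm
  have hcard1 : s ^ (p ^ n - 1) = 1 := by
    have := FiniteField.pow_card_sub_one_eq_one s hs0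
    rwa [hcard] at this
  have hone : (2 : GaloisField p n) ^ (p ^ n / 2) = 1 := by
    have h2' : 2 * (p ^ n / 2) = p ^ n - 1 := Nat.two_mul_odd_div_two (Nat.odd_iff.mp hpodd.pow)
    calc (2 : GaloisField p n) ^ (p ^ n / 2) = (s * s) ^ (p ^ n / 2) := by rw [hs]
      _ = s ^ (2 * (p ^ n / 2)) := by rw [← pow_two, ← pow_mul]
      _ = 1 := by rw [h2', hcard1]
  rw [hcontr] at hone
  exact h2F (by linear_combination - hone)

lemma chebW_ne_zero (k : ℕ) (hk : 1 ≤ k) (p : ℕ) [Fact p.Prime] (n : ℕ)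
    (hp2 : p ≠ 2) (hp : ¬ (p ∣ 2 * k + 1))
    (ζ : AlgebraicClosure (GaloisField p n))
    (hζ : IsPrimitiveRoot ζ (2 * k + 1))
    (hnot : ∀ i ∈ Finset.Icc 1 k, ∀ c : GaloisField p n,
      algebraMap (GaloisField p n) (AlgebraicClosure (GaloisField p n)) c
        ≠ ζ ^ (i : ℤ) + ζ ^ (-(i : ℤ)))
    (T : GaloisField p n) : chebW T k ≠ 0 := by
  intro hT0
  set φ := algebraMap (GaloisField p n) (AlgebraicClosure (GaloisField p n)) with hφ
  have hφinj : Function.Injective φ := RingHom.injective φ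
  haveI : CharP (AlgebraicClosure (GaloisField p n)) p :=
    charP_of_injective_algebraMap hφinj p
  obtain ⟨s, hs⟩ := IsAlgClosed.exists_pow_nat_eq (k := AlgebraicClosure (GaloisField p n))
    (φ T ^ 2 - 4) (n := 2) (by norm_num)
  have h2K : (2 : AlgebraicClosure (GaloisField p n)) ≠ 0 := by
    intro h
    have h' : ((2 : ℕ) : AlgebraicClosure (GaloisField p n)) = 0 := by exact_mod_cast h
    have := (CharP.cast_eq_zero_iff (AlgebraicClosure (GaloisField p n)) p 2).mp h'
    exact hp2 ((Nat.prime_dvd_prime_iff_eq Fact.out Nat.prime_two).mp this)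
  set lam : AlgebraicClosure (GaloisField p n) := (φ T + s) / 2 with hlam_def
  have hlam : lam * φ T = lam ^ 2 + 1 := by
    rw [hlam_def]
    field_simp
    linear_combination -1 * hs
  have hlam0 : lam ≠ 0 := by
    intro h
    rw [h] at hlam
    simp at hlam
  have hchebK : chebW (φ T) k = 0 := by
    rw [← chebW_map φ T k, hT0, map_zero]
  have key := chebW_identity (φ T) lam hlam k
  rw [hchebK, mul_zero] at key
  rcases mul_eq_zero.mp key.symm with h1 | h1
  · -- lam = 1, so T = 2
    have hl1 : lam = 1 := by linear_combination h1
    rw [hl1] at hlam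
    have hT2 : T = 2 := by
      apply hφinj
      rw [map_ofNat]
      linear_combination hlam
    rw [hT2, chebW_two' k] at hT0
    exact one_ne_zero hT0
  · -- lam ^ (2k+1) = -1
    have hoddk : Odd (2 * k + 1) := ⟨k, by ring⟩
    have hξpow : (-lam) ^ (2 * k + 1) = 1 := by
      rw [hoddk.neg_pow]
      linear_combination -h1
    haveI : NeZero (2 * k + 1) := ⟨by omega⟩
    obtain ⟨i, hi, hζi⟩ := hζ.eq_pow_of_pow_eq_one hξpow
    have hξ0 : (-lam) ≠ 0 := neg_ne_zero.mpr hlam0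
    have hTval : φ T = lam + lam⁻¹ := by
      field_simp
      linear_combination hlam
    by_cases hi0 : i = 0
    · -- lam = -1, T = -2
      subst hi0
      rw [pow_zero] at hζi
      have hlm1 : lam = -1 := by linear_combination hζi
      rw [hlm1] at hlam
      have hTm2 : T = -2 := by
        apply hφinj
        rw [map_neg, map_ofNat]
        linear_combination -hlam
      rw [hTm2, chebW_neg_two k] at hT0
      rcases mul_eq_zero.mp hT0 with h2 | h2
      · exact pow_ne_zero k (neg_ne_zero.mpr (one_ne_zero (α := GaloisField p n))) h2
      · exact hp ((CharP.cast_eq_zero_iff (GaloisField p n) p (2*k+1)).mp h2)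
    · by_cases hik : i ≤ k
      · refine hnot i (Finset.mem_Icc.mpr ⟨by omega, hik⟩) (-T) ?_
        rw [map_neg, hTval, _root_.zpow_neg, zpow_natCast, hζi, inv_neg]
        ring
      · have hii' : (2 * k + 1 - i) + i = 2 * k + 1 := by omega
        have hζinv : ζ ^ (2 * k + 1 - i) = (-lam)⁻¹ := by
          have h3 : ζ ^ (2 * k + 1 - i) * ζ ^ i = 1 := by
            rw [← pow_add, hii']
            exact hζ.pow_eq_one
          rw [hζi] at h3
          exact eq_inv_of_mul_eq_one_left h3
        refine hnot (2 * k + 1 - i) (Finset.mem_Icc.mpr ⟨by omega, by omega⟩) (-T) ?_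
        rw [map_neg, hTval, _root_.zpow_neg, zpow_natCast, hζinv, inv_inv, inv_neg]
        ring


/-- Key intermediate claim in the proof of Theorem 3.1: under the hypotheses of the
finite-field form of Theorem 3.1, every word value `x²·(x²·y·x^{2ε}·y⁻¹)^k` in
`SL₂(𝔽_{p^n})` has nonzero trace; in particular no trace-zero element of `SL₂(𝔽_{p^n})`
is a value of this word. -/
theorem trace_word_value_ne_zero
    (k : ℕ) (hk : 1 ≤ k) (ε : ℤ) (hε : ε = 1 ∨ ε = -1)
    (p : ℕ) [Fact p.Prime] (n : ℕ) (hn : 0 < n)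
    (hp : ¬ (p ∣ 2 * k + 1))
    (hodd : Odd n)
    (h2 : ¬ IsSquare (2 : ZMod p))
    (ζ : AlgebraicClosure (GaloisField p n))
    (hζ : IsPrimitiveRoot ζ (2 * k + 1))
    (hnot : ∀ i ∈ Finset.Icc 1 k, ∀ c : GaloisField p n,
      algebraMap (GaloisField p n) (AlgebraicClosure (GaloisField p n)) c
        ≠ ζ ^ (i : ℤ) + ζ ^ (-(i : ℤ))) :
    (∀ x y : Matrix.SpecialLinearGroup (Fin 2) (GaloisField p n),
      Matrix.trace
        ((x ^ 2 * (x ^ 2 * y * x ^ (2 * ε) * y⁻¹) ^ k :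
          Matrix.SpecialLinearGroup (Fin 2) (GaloisField p n)) :
          Matrix (Fin 2) (Fin 2) (GaloisField p n)) ≠ 0)
    ∧ ∀ g : Matrix.SpecialLinearGroup (Fin 2) (GaloisField p n),
        Matrix.trace ((g : Matrix (Fin 2) (Fin 2) (GaloisField p n))) = 0 →
        ∀ x y : Matrix.SpecialLinearGroup (Fin 2) (GaloisField p n),
          x ^ 2 * (x ^ 2 * y * x ^ (2 * ε) * y⁻¹) ^ k ≠ g := by
  have hp2 : p ≠ 2 := by
    intro h
    subst h
    have : IsSquare (2 : ZMod 2) := ⟨0, rfl⟩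
    exact h2 this
  have hsq : ∀ s : GaloisField p n, s * s ≠ 2 := two_not_sq p n hn hodd h2
  have hcheb : ∀ T : GaloisField p n, chebW T k ≠ 0 :=
    chebW_ne_zero k hk p n hp2 hp ζ hζ hnot
  have main : ∀ x y : Matrix.SpecialLinearGroup (Fin 2) (GaloisField p n),
      Matrix.trace
        ((x ^ 2 * (x ^ 2 * y * x ^ (2 * ε) * y⁻¹) ^ k :
          Matrix.SpecialLinearGroup (Fin 2) (GaloisField p n)) :
          Matrix (Fin 2) (Fin 2) (GaloisField p n)) ≠ 0 := by
    intro x y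
    have hassoc : x ^ 2 * y * x ^ (2 * ε) * y⁻¹ = x ^ 2 * (y * x ^ (2 * ε) * y⁻¹) := by
      group
    have hcoe : ((x ^ 2 * (x ^ 2 * y * x ^ (2 * ε) * y⁻¹) ^ k :
          Matrix.SpecialLinearGroup (Fin 2) (GaloisField p n)) :
          Matrix (Fin 2) (Fin 2) (GaloisField p n)) =
        ((x ^ 2 : Matrix.SpecialLinearGroup (Fin 2) (GaloisField p n)) :
          Matrix (Fin 2) (Fin 2) (GaloisField p n)) *
        (((x ^ 2 : Matrix.SpecialLinearGroup (Fin 2) (GaloisField p n)) :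
          Matrix (Fin 2) (Fin 2) (GaloisField p n)) *
         ((y * x ^ (2 * ε) * y⁻¹ : Matrix.SpecialLinearGroup (Fin 2) (GaloisField p n)) :
          Matrix (Fin 2) (Fin 2) (GaloisField p n))) ^ k := by
      rw [hassoc]
      simp only [Matrix.SpecialLinearGroup.coe_mul, Matrix.SpecialLinearGroup.coe_pow]
    -- trace of x ^ (2 ε) equals trace of x ^ 2
    have htr2e : Matrix.trace
          ((x ^ (2 * ε) : Matrix.SpecialLinearGroup (Fin 2) (GaloisField p n)) :
            Matrix (Fin 2) (Fin 2) (GaloisField p n)) =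
        Matrix.trace ((x ^ 2 : Matrix.SpecialLinearGroup (Fin 2) (GaloisField p n)) :
            Matrix (Fin 2) (Fin 2) (GaloisField p n)) := by
      rcases hε with rfl | rfl
      · rw [show (2 * (1:ℤ)) = ((2:ℕ):ℤ) by norm_num, zpow_natCast]
      · rw [show (2 * (-1:ℤ)) = -((2:ℕ):ℤ) by norm_num, _root_.zpow_neg, zpow_natCast,
          Matrix.SpecialLinearGroup.coe_inv, trace_adj_fin_two]
    have htv : Matrix.trace
          ((y * x ^ (2 * ε) * y⁻¹ : Matrix.SpecialLinearGroup (Fin 2) (GaloisField p n)) :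
            Matrix (Fin 2) (Fin 2) (GaloisField p n)) =
        Matrix.trace ((x ^ 2 : Matrix.SpecialLinearGroup (Fin 2) (GaloisField p n)) :
            Matrix (Fin 2) (Fin 2) (GaloisField p n)) := by
      rw [Matrix.SpecialLinearGroup.coe_mul, Matrix.SpecialLinearGroup.coe_mul,
        Matrix.trace_mul_cycle, ← Matrix.SpecialLinearGroup.coe_mul]
      simp [htr2e]
    rw [hcoe, trace_word _ _ (Matrix.SpecialLinearGroup.det_coe _)
      (Matrix.SpecialLinearGroup.det_coe _) htv k]
    apply mul_ne_zero
    · -- trace of x² is nonzero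
      intro ht0
      have hx2 : ((x ^ 2 : Matrix.SpecialLinearGroup (Fin 2) (GaloisField p n)) :
            Matrix (Fin 2) (Fin 2) (GaloisField p n)) =
          ((x : Matrix.SpecialLinearGroup (Fin 2) (GaloisField p n)) :
            Matrix (Fin 2) (Fin 2) (GaloisField p n)) *
          ((x : Matrix.SpecialLinearGroup (Fin 2) (GaloisField p n)) :
            Matrix (Fin 2) (Fin 2) (GaloisField p n)) := by
        rw [Matrix.SpecialLinearGroup.coe_pow, pow_two]
      rw [hx2, trace_sq_fin_two, Matrix.SpecialLinearGroup.det_coe] at ht0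
      have : Matrix.trace ((x : Matrix.SpecialLinearGroup (Fin 2) (GaloisField p n)) :
            Matrix (Fin 2) (Fin 2) (GaloisField p n)) *
          Matrix.trace ((x : Matrix.SpecialLinearGroup (Fin 2) (GaloisField p n)) :
            Matrix (Fin 2) (Fin 2) (GaloisField p n)) = 2 := by
        linear_combination ht0
      exact hsq _ this
    · exact hcheb _
  refine ⟨main, ?_⟩
  intro g hg x y hxy
  apply main x y
  rw [hxy]
  exact hg
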